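/- Let r ∈ L¹(ℝ₊), η : ℝ₊ → ℝ measurable, and let θ be an absolutely continuous solution of θ'(x) = -2 r(x) sin(θ(x)) cos(θ(x) + η(x)) on ℝ₊ with θ(x) → 0 as x → ∞. Then θ ≡ 0 on ℝ₊. -/

import Mathlib

open MeasureTheory Set

/-- If `r ∈ L¹(ℝ₊)`, `η` is measurable, and `θ` is an absolutely continuous
solution of `θ' = -2 r sin(θ) cos(θ + η)` on `ℝ₊` with `θ(x) → 0` as `x → ∞`,
then `θ ≡ 0` on `ℝ₊`. Absolute continuity is expressed via the fundamental
theorem of calculus identity with the (integrable) right-hand side. -/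
theorem stmt_13 (r η θ : ℝ → ℝ)
    (hr : IntegrableOn r (Ici 0)) (hη : Measurable η)
    (hint : IntegrableOn
      (fun t => -2 * r t * Real.sin (θ t) * Real.cos (θ t + η t)) (Ici 0))
    (hAC : ∀ x ∈ Ici (0:ℝ),
      θ x = θ 0 + ∫ t in Ioc (0:ℝ) x, -2 * r t * Real.sin (θ t) * Real.cos (θ t + η t))
    (hlim : Filter.Tendsto θ Filter.atTop (nhds 0)) :
    ∀ x ∈ Ici (0:ℝ), θ x = 0 := by
  set f : ℝ → ℝ := fun t => -2 * r t * Real.sin (θ t) * Real.cos (θ t + η t) with hfdef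
  have hf_int : IntegrableOn f (Ici 0) := hint
  have hIoi_sub : ∀ x : ℝ, 0 ≤ x → Ioi x ⊆ Ici (0:ℝ) := fun x hx t ht => le_trans hx (le_of_lt ht)
  have hIoc_sub : ∀ a b : ℝ, 0 ≤ a → Ioc a b ⊆ Ici (0:ℝ) := fun a b ha t ht => le_trans ha (le_of_lt ht.1)
  have hf_Ioi : ∀ x : ℝ, 0 ≤ x → IntegrableOn f (Ioi x) := fun x hx => hf_int.mono_set (hIoi_sub x hx)
  have hFind : Integrable ((Ici (0:ℝ)).indicator f) := hf_int.integrable_indicator measurableSet_Ici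
  have hGind : Integrable ((Ici (0:ℝ)).indicator fun t => |r t|) :=
    IntegrableOn.integrable_indicator hr.abs measurableSet_Ici
  have hind : ∀ (g : ℝ → ℝ) (s : Set ℝ), s ⊆ Ici 0 →
      ∫ t in s, (Ici (0:ℝ)).indicator g t = ∫ t in s, g t := by
    intro g s hsub
    rw [setIntegral_indicator measurableSet_Ici, inter_eq_left.mpr hsub]
  have hθAC : ∀ x ∈ Ici (0:ℝ), θ x = θ 0 + ∫ t in (0:ℝ)..x, (Ici (0:ℝ)).indicator f t := by
    intro x hx
    rw [hAC x hx, intervalIntegral.integral_of_le hx,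
      hind f (Ioc 0 x) (hIoc_sub 0 x le_rfl)]
  have hθcont : ContinuousOn θ (Ici 0) :=
    ((continuous_const.add (hFind.continuous_primitive 0)).continuousOn).congr hθAC
  have key0 : θ 0 + ∫ t in Ioi (0:ℝ), f t = 0 := by
    have h1 : Filter.Tendsto (fun x => θ 0 + ∫ t in (0:ℝ)..x, (Ici (0:ℝ)).indicator f t)
        Filter.atTop (nhds (θ 0 + ∫ t in Ioi (0:ℝ), (Ici (0:ℝ)).indicator f t)) :=
      tendsto_const_nhds.add
        (intervalIntegral_tendsto_integral_Ioi 0 hFind.integrableOn Filter.tendsto_id)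
    have h2 : (fun x => θ 0 + ∫ t in (0:ℝ)..x, (Ici (0:ℝ)).indicator f t) =ᶠ[Filter.atTop] θ :=
      (Filter.eventually_ge_atTop 0).mono fun x hx => (hθAC x hx).symm
    have := tendsto_nhds_unique (h1.congr' h2) hlim
    rwa [hind f (Ioi 0) (hIoi_sub 0 le_rfl)] at this
  have hsplit : ∀ (g : ℝ → ℝ), IntegrableOn g (Ici 0) → ∀ a x : ℝ, 0 ≤ a → a ≤ x →
      ∫ t in Ioi a, g t = (∫ t in Ioc a x, g t) + ∫ t in Ioi x, g t := by
    intro g hg a x ha hax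
    rw [← setIntegral_union (Ioc_disjoint_Ioi le_rfl) measurableSet_Ioi
      (hg.mono_set (hIoc_sub a x ha)) (hg.mono_set (hIoi_sub x (le_trans ha hax))),
      Ioc_union_Ioi_eq_Ioi hax]
  have hrep : ∀ x ∈ Ici (0:ℝ), θ x = -∫ t in Ioi x, f t := by
    intro x hx
    have h1 := hAC x hx
    have h2 := hsplit f hf_int 0 x le_rfl hx
    rw [h2] at key0
    linarith [h1, key0]
  -- global bound on |θ| over Ici 0
  obtain ⟨M, hM⟩ : ∃ M : ℝ, ∀ x ∈ Ici (0:ℝ), |θ x| ≤ M := by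
    obtain ⟨T, hT⟩ := (Metric.tendsto_atTop.mp hlim 1 one_pos)
    obtain ⟨C, hC⟩ := IsCompact.exists_bound_of_continuousOn isCompact_Icc
      (hθcont.mono (Icc_subset_Ici_self : Icc (0:ℝ) (max T 0) ⊆ Ici 0))
    refine ⟨max C 1, fun x hx => ?_⟩
    rcases le_or_gt x (max T 0) with h | h
    · exact le_trans (by simpa [Real.norm_eq_abs] using hC x ⟨hx, h⟩) (le_max_left _ _)
    · have := hT x (le_of_lt (lt_of_le_of_lt (le_max_left T 0) h))
      rw [Real.dist_eq, sub_zero] at this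
      exact le_trans this.le (le_max_right _ _)
  have hM0 : 0 ≤ M := le_trans (abs_nonneg _) (hM 0 (mem_Ici.mpr le_rfl))
  have hθmeas : AEStronglyMeasurable θ (volume.restrict (Ici 0)) :=
    hθcont.aestronglyMeasurable measurableSet_Ici
  have hrθ : IntegrableOn (fun t => |r t| * |θ t|) (Ici 0) := by
    refine Integrable.mono' (hr.abs.const_mul M) ?_ ?_
    · simpa [Real.norm_eq_abs, Pi.mul_def] using hr.aestronglyMeasurable.norm.mul hθmeas.norm
    · refine (ae_restrict_iff' measurableSet_Ici).mpr (Filter.Eventually.of_forall fun t ht => ?_)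
      have h1 : |θ t| ≤ M := hM t ht
      have h2 : (0:ℝ) ≤ |r t| := abs_nonneg _
      have : ‖|r t| * |θ t|‖ = |r t| * |θ t| := by
        rw [Real.norm_eq_abs, abs_of_nonneg (mul_nonneg h2 (abs_nonneg _))]
      rw [this]
      nlinarith
  have hptw : ∀ t, |f t| ≤ 2 * (|r t| * |θ t|) := by
    intro t
    have h1 : |Real.sin (θ t)| ≤ |θ t| := Real.abs_sin_le_abs
    have h2 : |Real.cos (θ t + η t)| ≤ 1 := Real.abs_cos_le_one _
    have h3 : |f t| = 2 * |r t| * |Real.sin (θ t)| * |Real.cos (θ t + η t)| := by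
      rw [hfdef]; simp [abs_mul]
    rw [h3]
    nlinarith [mul_le_mul h1 h2 (abs_nonneg _) (abs_nonneg _), abs_nonneg (r t),
      abs_nonneg (Real.sin (θ t)), abs_nonneg (θ t)]
  have hbound : ∀ x ∈ Ici (0:ℝ), |θ x| ≤ 2 * ∫ t in Ioi x, |r t| * |θ t| := by
    intro x hx
    rw [hrep x hx, abs_neg]
    calc |∫ t in Ioi x, f t| ≤ ∫ t in Ioi x, |f t| := by
          simpa [Real.norm_eq_abs] using
            norm_integral_le_integral_norm (μ := volume.restrict (Ioi x)) f
      _ ≤ ∫ t in Ioi x, 2 * (|r t| * |θ t|) := by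
          exact integral_mono (hf_Ioi x hx).abs
            ((hrθ.mono_set (hIoi_sub x hx)).const_mul 2) hptw
      _ = 2 * ∫ t in Ioi x, |r t| * |θ t| := integral_const_mul 2 _
  -- tail integral of |r| tends to 0
  have htail : Filter.Tendsto (fun x => ∫ t in Ioi x, |r t|) Filter.atTop (nhds 0) := by
    have h1 : Filter.Tendsto (fun x => ∫ t in (0:ℝ)..x, (Ici (0:ℝ)).indicator (fun t => |r t|) t)
        Filter.atTop (nhds (∫ t in Ioi (0:ℝ), |r t|)) := by
      have := intervalIntegral_tendsto_integral_Ioi 0 hGind.integrableOn Filter.tendsto_id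
      rwa [hind (fun t => |r t|) (Ioi 0) (hIoi_sub 0 le_rfl)] at this
    have h2 : (fun x => (∫ t in Ioi (0:ℝ), |r t|) - ∫ t in (0:ℝ)..x, (Ici (0:ℝ)).indicator (fun t => |r t|) t)
        =ᶠ[Filter.atTop] fun x => ∫ t in Ioi x, |r t| := by
      refine (Filter.eventually_ge_atTop 0).mono fun x hx => ?_
      dsimp only
      rw [intervalIntegral.integral_of_le hx, hind (fun t => |r t|) (Ioc 0 x) (hIoc_sub 0 x le_rfl),
        hsplit (fun t => |r t|) hr.abs 0 x le_rfl hx]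
      ring
    have h3 := (tendsto_const_nhds.sub h1).congr' h2
    simpa using h3
  obtain ⟨X, hX0, hX⟩ : ∃ X : ℝ, 0 ≤ X ∧ (∫ t in Ioi X, |r t|) ≤ 1/8 := by
    have := (htail.eventually_lt_const (by norm_num : (0:ℝ) < 1/8)).and
      (Filter.eventually_ge_atTop (0:ℝ))
    obtain ⟨X, h1, h2⟩ := this.exists
    exact ⟨X, h2, h1.le⟩
  -- θ vanishes on [X, ∞)
  have hXzero : ∀ y ∈ Ici X, θ y = 0 := by
    have hne : ((fun x => |θ x|) '' Ici X).Nonempty := ⟨|θ X|, mem_image_of_mem _ (mem_Ici.mpr le_rfl)⟩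
    have hbdd : BddAbove ((fun x => |θ x|) '' Ici X) := by
      refine ⟨M, ?_⟩
      rintro y ⟨x, hx, rfl⟩
      exact hM x (le_trans hX0 hx)
    set c := sSup ((fun x => |θ x|) '' Ici X) with hc
    have hcle : ∀ x ∈ Ici X, |θ x| ≤ c := fun x hx => le_csSup hbdd (mem_image_of_mem _ hx)
    have hc0 : 0 ≤ c := le_trans (abs_nonneg _) (hcle X (mem_Ici.mpr le_rfl))
    have hstep : ∀ x ∈ Ici X, |θ x| ≤ c / 2 := by
      intro x hx
      have hx0 : (0:ℝ) ≤ x := le_trans hX0 hx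
      calc |θ x| ≤ 2 * ∫ t in Ioi x, |r t| * |θ t| := hbound x hx0
        _ ≤ 2 * ∫ t in Ioi x, |r t| * c := by
            refine mul_le_mul_of_nonneg_left ?_ (by norm_num)
            refine setIntegral_mono_on (hrθ.mono_set (hIoi_sub x hx0))
              ((((hr.mono_set (hIoi_sub x hx0)).abs).const_mul c).congr
                (Filter.Eventually.of_forall fun t => by ring)) measurableSet_Ioi ?_
            intro t ht
            exact mul_le_mul_of_nonneg_left (hcle t (mem_Ici.mpr (le_trans (mem_Ici.mp hx) (le_of_lt (mem_Ioi.mp ht))))) (abs_nonneg _)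
        _ = 2 * ((∫ t in Ioi x, |r t|) * c) := by rw [integral_mul_const]
        _ ≤ 2 * ((∫ t in Ioi X, |r t|) * c) := by
            refine mul_le_mul_of_nonneg_left (mul_le_mul_of_nonneg_right ?_ hc0) (by norm_num)
            refine setIntegral_mono_set ((hr.mono_set (hIoi_sub X hX0)).abs)
              (Filter.Eventually.of_forall fun t => abs_nonneg _)
              (HasSubset.Subset.eventuallyLE (Ioi_subset_Ioi hx))
        _ ≤ 2 * (1/8 * c) := by
            exact mul_le_mul_of_nonneg_left (mul_le_mul_of_nonneg_right hX hc0) (by norm_num)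
        _ ≤ c / 2 := by linarith
    have hcc : c ≤ c / 2 := by
      refine csSup_le hne ?_
      rintro y ⟨x, hx, rfl⟩
      exact hstep x hx
    have : c = 0 := by linarith
    intro y hy
    exact abs_nonpos_iff.mp (this ▸ hcle y hy)
  -- the set where θ vanishes from some point on
  set A : Set ℝ := {x : ℝ | 0 ≤ x ∧ ∀ y ∈ Ici x, θ y = 0} with hA
  have hXA : X ∈ A := ⟨hX0, hXzero⟩
  have hAbdd : BddBelow A := ⟨0, fun x hx => hx.1⟩
  set b := sInf A with hbdef
  have hb0 : 0 ≤ b := le_csInf ⟨X, hXA⟩ fun x hx => hx.1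
  have hgt : ∀ y, b < y → θ y = 0 := by
    intro y hy
    obtain ⟨a, haA, hay⟩ := exists_lt_of_csInf_lt ⟨X, hXA⟩ hy
    exact haA.2 y (le_of_lt hay)
  have hfb : ∀ z, b ≤ z → ∫ t in Ioi z, f t = 0 := by
    intro z hz
    rw [setIntegral_congr_fun measurableSet_Ioi (g := fun _ => (0:ℝ))
      (fun t ht => by simp [hfdef, hgt t (lt_of_le_of_lt hz ht)])]
    simp
  have hθb : θ b = 0 := by
    rw [hrep b hb0, hfb b le_rfl, neg_zero]
  have hbA : ∀ y ∈ Ici b, θ y = 0 := by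
    intro y hy
    rcases eq_or_lt_of_le (mem_Ici.mp hy) with h | h
    · rw [← h]; exact hθb
    · exact hgt y h
  -- b = 0
  have hbz : b ≤ 0 := by
    by_contra hbpos
    push_neg at hbpos
    -- choose a < b, a ≥ 0, with small integral of |r| on (a, b]
    set P : ℝ → ℝ := fun x => ∫ t in (0:ℝ)..x, (Ici (0:ℝ)).indicator (fun t => |r t|) t with hP
    have hPcont : Continuous P := hGind.continuous_primitive 0
    obtain ⟨δ, hδ0, hδ⟩ := Metric.continuousAt_iff.mp (hPcont.continuousAt (x := b))
      (1/8) (by norm_num)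
    set a := max 0 (b - δ/2) with ha
    have ha0 : 0 ≤ a := le_max_left _ _
    have hab : a < b := max_lt hbpos (by linarith)
    have hdist : dist a b < δ := by
      rw [Real.dist_eq, abs_of_nonpos (by linarith)]
      have : b - δ/2 ≤ a := le_max_right _ _
      linarith
    have hsmall : ∫ t in Ioc a b, |r t| ≤ 1/8 := by
      have h1 : P b - P a = ∫ t in Ioc a b, |r t| := by
        rw [hP]
        rw [intervalIntegral.integral_interval_sub_left ((hGind.intervalIntegrable : IntervalIntegrable _ volume 0 b))
          ((hGind.intervalIntegrable : IntervalIntegrable _ volume 0 a)),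
          intervalIntegral.integral_of_le hab.le, hind (fun t => |r t|) (Ioc a b) (hIoc_sub a b ha0)]
      have h2 := hδ hdist
      rw [Real.dist_eq] at h2
      have := abs_lt.mp h2
      linarith [this.1, this.2, h1]
    -- sup argument on [a, b]
    have hIccsub : Icc a b ⊆ Ici (0:ℝ) := fun t ht => le_trans ha0 ht.1
    have hne : ((fun x => |θ x|) '' Icc a b).Nonempty :=
      ⟨|θ a|, mem_image_of_mem _ ⟨le_rfl, hab.le⟩⟩
    have hbdd : BddAbove ((fun x => |θ x|) '' Icc a b) := by
      refine ⟨M, ?_⟩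
      rintro y ⟨x, hx, rfl⟩
      exact hM x (hIccsub hx)
    set c := sSup ((fun x => |θ x|) '' Icc a b) with hc
    have hcle : ∀ x ∈ Icc a b, |θ x| ≤ c := fun x hx => le_csSup hbdd (mem_image_of_mem _ hx)
    have hc0 : 0 ≤ c := le_trans (abs_nonneg _) (hcle a ⟨le_rfl, hab.le⟩)
    have hstep : ∀ x ∈ Icc a b, |θ x| ≤ c / 2 := by
      intro x hx
      have hx0 : (0:ℝ) ≤ x := hIccsub hx
      have hIocx : Ioc x b ⊆ Ici (0:ℝ) := hIoc_sub x b hx0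
      have hrepx : θ x = -∫ t in Ioc x b, f t := by
        rw [hrep x hx0, hsplit f hf_int x b hx0 hx.2]
        rw [hfb b le_rfl, add_zero]
      calc |θ x| = |∫ t in Ioc x b, f t| := by rw [hrepx, abs_neg]
        _ ≤ ∫ t in Ioc x b, |f t| := by
            simpa [Real.norm_eq_abs] using
              norm_integral_le_integral_norm (μ := volume.restrict (Ioc x b)) f
        _ ≤ ∫ t in Ioc x b, 2 * (|r t| * |θ t|) := by
            exact integral_mono (hf_int.mono_set hIocx).abs
              ((hrθ.mono_set hIocx).const_mul 2) hptw
        _ = 2 * ∫ t in Ioc x b, |r t| * |θ t| := integral_const_mul 2 _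
        _ ≤ 2 * ∫ t in Ioc a b, |r t| * |θ t| := by
            refine mul_le_mul_of_nonneg_left ?_ (by norm_num)
            refine setIntegral_mono_set (hrθ.mono_set (hIoc_sub a b ha0))
              (Filter.Eventually.of_forall fun t => mul_nonneg (abs_nonneg _) (abs_nonneg _))
              (HasSubset.Subset.eventuallyLE (Ioc_subset_Ioc_left hx.1))
        _ ≤ 2 * ∫ t in Ioc a b, |r t| * c := by
            refine mul_le_mul_of_nonneg_left ?_ (by norm_num)
            refine setIntegral_mono_on (hrθ.mono_set (hIoc_sub a b ha0))
              (((hr.mono_set (hIoc_sub a b ha0)).abs.const_mul c).congr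
                (Filter.Eventually.of_forall fun t => by ring)) measurableSet_Ioc ?_
            intro t ht
            exact mul_le_mul_of_nonneg_left (hcle t ⟨ht.1.le, ht.2⟩) (abs_nonneg _)
        _ = 2 * ((∫ t in Ioc a b, |r t|) * c) := by rw [integral_mul_const]
        _ ≤ 2 * (1/8 * c) := by
            exact mul_le_mul_of_nonneg_left (mul_le_mul_of_nonneg_right hsmall hc0) (by norm_num)
        _ ≤ c / 2 := by linarith
    have hcc : c ≤ c / 2 := by
      refine csSup_le hne ?_
      rintro y ⟨x, hx, rfl⟩
      exact hstep x hx
    have hczero : c = 0 := by linarith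
    have haA : a ∈ A := by
      refine ⟨ha0, fun y hy => ?_⟩
      rcases le_or_gt y b with h | h
      · exact abs_nonpos_iff.mp (hczero ▸ hcle y ⟨hy, h⟩)
      · exact hgt y h
    have : b ≤ a := csInf_le hAbdd haA
    linarith
  have hbeq : b = 0 := le_antisymm hbz hb0
  intro x hx
  exact hbA x (hbeq ▸ hx)
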